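/- In a Kleene S-algebra (S a finite copo-semiring), the inequality 1 ⊙ s* ≤ (1 ⊙ s)* together with the other axioms implies the equality 1 ⊙ s* = (1 ⊙ s)*. -/

import Mathlib

/-- A Kleene `S`-algebra: a Kleene algebra `X` with a right `S`-semimodule action
`act : X → S → X` satisfying `(x·y)⊙s = x·(y⊙s) = (x⊙s)·y`. -/
class KleeneSMod (S : Type*) (X : Type*) [Semiring S] [KleeneAlgebra X] where
  act : X → S → X
  act_add_right : ∀ (x : X) (s t : S), act x (s + t) = act x s + act x t
  act_add_left : ∀ (x y : X) (s : S), act (x + y) s = act x s + act y s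
  act_mul_right : ∀ (x : X) (s t : S), act x (s * t) = act (act x s) t
  act_one : ∀ x : X, act x 1 = x
  act_zero : ∀ x : X, act x 0 = 0
  zero_act : ∀ s : S, act (0 : X) s = 0
  mul_act : ∀ (x y : X) (s : S), act (x * y) s = x * act y s
  act_mul : ∀ (x y : X) (s : S), act (x * y) s = act x s * y


open KleeneSMod in
private lemma act_one_sum {S X : Type*} [Semiring S] [KleeneAlgebra X] [KleeneSMod S X]
    (F : Finset ℕ) (f : ℕ → S) :
    act (1:X) (∑ i ∈ F, f i) = ∑ i ∈ F, act (1:X) (f i) := by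
  classical
  induction F using Finset.cons_induction with
  | empty => simp [act_zero]
  | cons a F ha ih => rw [Finset.sum_cons, Finset.sum_cons, act_add_right, ih]

/-- In a Kleene `S`-algebra over a finite copo-semiring `S`, the axiom
`1 ⊙ s* ≤ (1 ⊙ s)*` together with the other axioms implies `1 ⊙ s* = (1 ⊙ s)*`. -/
theorem stmt10 {S X : Type*} [CommSemiring S] [Fintype S] [PartialOrder S]
    [KleeneAlgebra X] [KleeneSMod S X]
    (hadd_mono : ∀ a b c d : S, a ≤ b → c ≤ d → a + c ≤ b + d)
    (hmul_mono : ∀ a b c d : S, a ≤ b → c ≤ d → a * c ≤ b * d)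
    (hzero_le : ∀ s : S, (0 : S) ≤ s)
    (sstar : S → S)
    (hsstar : ∀ s : S, ∃ N : ℕ, ∀ m ≥ N,
      (∑ i ∈ Finset.range (m + 1), s ^ i) = sstar s)
    (hax : ∀ s : S,
      KleeneSMod.act (1 : X) (sstar s) ≤ KStar.kstar (KleeneSMod.act (1 : X) s)) :
    ∀ s : S,
      KleeneSMod.act (1 : X) (sstar s) = KStar.kstar (KleeneSMod.act (1 : X) s) := by
  intro s
  obtain ⟨N, hN⟩ := hsstar s
  refine le_antisymm (hax s) ?_
  have h1 : KleeneSMod.act (1:X) (sstar s) = ∑ i ∈ Finset.range (N+2), KleeneSMod.act (1:X) (s^i) := by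
    rw [← hN (N+1) (by omega), act_one_sum]
  have hnn : ∀ x : X, (0:X) ≤ x := fun x => by simpa using (bot_le : (⊥:X) ≤ x)
  apply kstar_le_of_mul_le_left
  · -- 1 ≤ act 1 (sstar s)
    rw [h1]
    calc (1:X) = KleeneSMod.act (1:X) (s^0) := by simp [KleeneSMod.act_one]
    _ ≤ _ := Finset.single_le_sum (f := fun i => KleeneSMod.act (1:X) (s^i)) (fun i _ => hnn _) (show (0:ℕ) ∈ Finset.range (N+2) from Finset.mem_range.mpr (by omega))
  · -- act 1 (sstar s) * act 1 s ≤ act 1 (sstar s)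
    have hm : KleeneSMod.act (1:X) (sstar s) * KleeneSMod.act (1:X) s
        = KleeneSMod.act (1:X) (sstar s * s) := by
      rw [KleeneSMod.act_mul_right, ← KleeneSMod.mul_act, mul_one]
    have h2 : sstar s * s = ∑ i ∈ Finset.range (N+1), s^(i+1) := by
      rw [← hN N le_rfl, Finset.sum_mul]
      simp_rw [pow_succ]
    rw [hm, h2, act_one_sum, h1]
    have hsub : ∑ i ∈ Finset.range (N+1), KleeneSMod.act (1:X) (s^(i+1))
        = ∑ i ∈ Finset.Ico 1 (N+2), KleeneSMod.act (1:X) (s^i) := by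
      rw [Finset.sum_Ico_eq_sum_range]
      simp [add_comm]
    rw [hsub]
    apply Finset.sum_le_sum_of_subset_of_nonneg
    · intro i hi
      simp only [Finset.mem_Ico] at hi
      simp [Finset.mem_range]; omega
    · intro i _ _; exact hnn _
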